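/- Let ε, L, R, Δ > 0, let p, N be natural numbers, and let F, S be real numbers with S > 0. Assume: (i) 2^p ≤ 2·(1 + 16Δ²/(εL)); (ii) S ≥ N/(2^{p+1}L); (iii) F ≤ R²/S + ε/2; and (iv) N ≥ 8LR²/ε + 128Δ²R²/ε². Then F ≤ ε. -/

import Mathlib

/-- Complexity count for the modified adaptive gradient method for nonsmooth
convex problems: `O(LR²/ε + Δ²R²/ε²)` iterations guarantee accuracy `ε`. -/
theorem nonsmooth_complexity_count
    (ε L R Δ : ℝ) (hε : 0 < ε) (hL : 0 < L) (hR : 0 < R) (hΔ : 0 < Δ)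
    (p N : ℕ) (F S : ℝ) (hS : 0 < S)
    (hp : (2 : ℝ) ^ p ≤ 2 * (1 + 16 * Δ ^ 2 / (ε * L)))
    (hSN : S ≥ (N : ℝ) / ((2 : ℝ) ^ (p + 1) * L))
    (hF : F ≤ R ^ 2 / S + ε / 2)
    (hN : (N : ℝ) ≥ 8 * L * R ^ 2 / ε + 128 * Δ ^ 2 * R ^ 2 / ε ^ 2) :
    F ≤ ε := by
  set A : ℝ := 4 * L + 64 * Δ ^ 2 / ε with hA
  have hApos : 0 < A := by positivity
  have h2p : (0:ℝ) < (2 : ℝ) ^ (p + 1) * L := by positivity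
  -- 2^{p+1} L ≤ A
  have hpow : (2 : ℝ) ^ (p + 1) * L ≤ A := by
    have : (2 : ℝ) ^ (p + 1) * L = 2 * ((2:ℝ) ^ p) * L := by ring
    rw [this]
    have h1 : 2 * ((2:ℝ)^p) * L ≤ 2 * (2 * (1 + 16 * Δ ^ 2 / (ε * L))) * L := by
      nlinarith
    calc 2 * ((2:ℝ)^p) * L ≤ 2 * (2 * (1 + 16 * Δ ^ 2 / (ε * L))) * L := h1
      _ = A := by rw [hA]; field_simp; ring
  -- N ≥ (2R²/ε) * A
  have hNA : (N : ℝ) ≥ 2 * R ^ 2 / ε * A := by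
    have : 2 * R ^ 2 / ε * A = 8 * L * R ^ 2 / ε + 128 * Δ ^ 2 * R ^ 2 / ε ^ 2 := by
      rw [hA]; field_simp; ring
    linarith [hN]
  -- S ≥ 2R²/ε
  have hS2 : S ≥ 2 * R ^ 2 / ε := by
    have h1 : (N : ℝ) / A ≤ (N : ℝ) / ((2:ℝ) ^ (p+1) * L) :=
      div_le_div_of_nonneg_left (Nat.cast_nonneg N) h2p hpow
    have h2 : 2 * R ^ 2 / ε ≤ (N : ℝ) / A := by
      rw [le_div_iff₀ hApos]; linarith
    linarith
  have hRS : R ^ 2 / S ≤ ε / 2 := by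
    rw [div_le_iff₀ hS]
    have : 2 * R ^ 2 / ε * (ε / 2) = R ^ 2 := by field_simp
    nlinarith
  linarith
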